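/- arXiv:2002.01711 — 3 statements merged into one kernel-verified Lean document; each statement's English description precedes it below -/
import Mathlib

section
/- For every time t ≥ 0, every action a' ∈ {0,1}, and every bounded measurable test function φ : S × {0,1} → ℝ, one has E[ {Q(a'; A_t, S_t) − Y_t − γ Q(a'; a', S_{t+1})} · φ(S_t, A_t) ] = 0. -/
open MeasureTheory Filter

private lemma meas_tsum_real {α : Type*} [MeasurableSpace α] {f : ℕ → α → ℝ}
    (hf : ∀ n, Measurable (f n)) (hs : ∀ x, Summable fun n => f n x) :
    Measurable fun x => ∑' n, f n x := by
  apply measurable_of_tendsto_metrizable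
    (f := fun N x => ∑ n ∈ Finset.range N, f n x)
    (fun N => Finset.measurable_sum _ fun n _ => hf n)
  rw [tendsto_pi_nhds]
  exact fun x => (hs x).hasSum.tendsto_sum_nat

/-- For every time `t ≥ 0`, every action `a' ∈ {0,1}`, and every bounded
measurable test function `φ : S × {0,1} → ℝ`, one has
`E[{Q(a';A_t,S_t) − Y_t − γ Q(a';a',S_{t+1})} · φ(S_t, A_t)] = 0`. -/
theorem q_function_estimating_equation
    {S : Type*} [MeasurableSpace S]
    {Ω : Type*} [MeasurableSpace Ω] (μ : Measure Ω) [IsProbabilityMeasure μ]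
    -- the Markov transition kernel `P(·;a,s)`
    (P : Bool → S → Measure S)
    (hPprob : ∀ a s, IsProbabilityMeasure (P a s))
    (hPmeas : ∀ (a : Bool) (f : S → ℝ), Measurable f →
      Measurable fun s => ∫ s', f s' ∂(P a s))
    -- the bounded measurable reward function
    (r : Bool → S → ℝ) (R : ℝ)
    (hrmeas : ∀ a, Measurable (r a))
    (hrbdd : ∀ a s, |r a s| ≤ R)
    -- the discount factor
    (γ : ℝ) (hγ0 : 0 < γ) (hγ1 : γ < 1)
    -- the transition operator `P_a`
    (Pop : Bool → (S → ℝ) → (S → ℝ))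
    (hPop : ∀ a f s, Pop a f s = ∫ s', f s' ∂(P a s))
    -- the value function and the Q-function
    (V : Bool → S → ℝ)
    (hV : ∀ a s, V a s = ∑' t : ℕ, γ ^ t * ((Pop a)^[t] (r a)) s)
    (Q : Bool → Bool → S → ℝ)
    (hQ : ∀ a' a s, Q a' a s
      = r a s + ∑' t : ℕ, γ ^ (t + 1) * (Pop a ((Pop a')^[t] (r a'))) s)
    -- the observed state, action and outcome processes
    (St : ℕ → Ω → S) (At : ℕ → Ω → Bool) (Yt : ℕ → Ω → ℝ)
    (hSt : ∀ t, Measurable (St t)) (hAt : ∀ t, Measurable (At t))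
    (hYt : ∀ t, Integrable (Yt t) μ)
    -- the filtration `H_t = σ(S_0, A_0, Y_0, …, S_{t−1}, A_{t−1}, Y_{t−1}, S_t, A_t)`
    (H : ℕ → MeasurableSpace Ω)
    (hH : ∀ t, H t
      = (⨆ j ≤ t, MeasurableSpace.comap (St j) inferInstance)
        ⊔ (⨆ j ≤ t, MeasurableSpace.comap (At j) inferInstance)
        ⊔ (⨆ j < t, MeasurableSpace.comap (Yt j) inferInstance))
    -- the observed-data Markov assumption
    (hMarkov : ∀ (t : ℕ) (g : S → ℝ), Measurable g → (∃ B, ∀ s, |g s| ≤ B) →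
      μ[(fun ω => g (St (t + 1) ω)) | H t] =ᵐ[μ] fun ω => Pop (At t ω) g (St t ω))
    -- the conditional mean independence assumption
    (hCMI : ∀ t : ℕ, μ[Yt t | H t] =ᵐ[μ] fun ω => r (At t ω) (St t ω)) :
    ∀ (t : ℕ) (a' : Bool) (φ : S × Bool → ℝ),
      Measurable φ → (∃ B, ∀ x, |φ x| ≤ B) →
      ∫ ω, (Q a' (At t ω) (St t ω) - Yt t ω - γ * Q a' a' (St (t + 1) ω))
          * φ (St t ω, At t ω) ∂μ = 0 := by
  intro t a' φ hφm hφb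
  obtain ⟨B, hB⟩ := hφb
  classical
  by_cases hm : H t ≤ ‹MeasurableSpace Ω›
  swap
  · -- degenerate case: the conditional expectation is 0, contradicting `hMarkov` at `g = 1`.
    exfalso
    have h1 := hMarkov t (fun _ => 1) measurable_const ⟨1, fun s => by simp⟩
    rw [condExp_of_not_le hm] at h1
    obtain ⟨ω, hω⟩ := h1.exists
    simp only [Pi.zero_apply] at hω
    have h2 : Pop (At t ω) (fun _ => (1 : ℝ)) (St t ω) = 1 := by
      haveI := hPprob (At t ω) (St t ω)
      rw [hPop]; simp
    rw [h2] at hω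
    exact zero_ne_one hω
  -- main case
  set R₀ : ℝ := max R 0 with hR₀def
  have hR₀ : 0 ≤ R₀ := le_max_right _ _
  have hr₀ : ∀ a s, |r a s| ≤ R₀ := fun a s => (hrbdd a s).trans (le_max_left _ _)
  -- basic facts about the transition operator
  have hPopm : ∀ (a : Bool) (f : S → ℝ), Measurable f → Measurable (Pop a f) := by
    intro a f hf
    have h : Pop a f = fun s => ∫ s', f s' ∂(P a s) := funext fun s => hPop a f s
    rw [h]; exact hPmeas a f hf
  have hPopb : ∀ (a : Bool) (f : S → ℝ) (C : ℝ), (∀ s, |f s| ≤ C) →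
      ∀ s, |Pop a f s| ≤ C := by
    intro a f C hfC s
    haveI := hPprob a s
    rw [hPop]
    calc |∫ s', f s' ∂(P a s)| = ‖∫ s', f s' ∂(P a s)‖ := (Real.norm_eq_abs _).symm
      _ ≤ C * ((P a s) Set.univ).toReal :=
          norm_integral_le_of_norm_le_const
            (Eventually.of_forall fun s' => by rw [Real.norm_eq_abs]; exact hfC s')
      _ = C := by simp
  -- iterates of the transition operator
  have hiterm : ∀ (n : ℕ) (a : Bool), Measurable ((Pop a)^[n] (r a')) := by
    intro n a
    induction n with
    | zero => simpa using hrmeas a'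
    | succ n ih => rw [Function.iterate_succ_apply']; exact hPopm a _ ih
  have hiterb : ∀ (n : ℕ) (a : Bool) (s : S), |((Pop a)^[n] (r a')) s| ≤ R₀ := by
    intro n a
    induction n with
    | zero => simpa using hr₀ a'
    | succ n ih => rw [Function.iterate_succ_apply']; exact hPopb a _ _ ih
  have hgeo : Summable fun n : ℕ => γ ^ n := summable_geometric_of_lt_one hγ0.le hγ1
  -- summability of the series defining `Q`
  have hterm_b : ∀ (a : Bool) (s : S) (n : ℕ),
      |γ ^ (n + 1) * Pop a ((Pop a')^[n] (r a')) s| ≤ R₀ * γ * γ ^ n := by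
    intro a s n
    rw [abs_mul, abs_of_nonneg (pow_nonneg hγ0.le (n + 1))]
    calc γ ^ (n + 1) * |Pop a ((Pop a')^[n] (r a')) s|
        ≤ γ ^ (n + 1) * R₀ :=
          mul_le_mul_of_nonneg_left (hPopb a _ _ (hiterb n a') s) (by positivity)
      _ = R₀ * γ * γ ^ n := by rw [pow_succ]; ring
  have hsum1 : ∀ (a : Bool) (s : S),
      Summable fun n : ℕ => γ ^ (n + 1) * Pop a ((Pop a')^[n] (r a')) s := by
    intro a s
    refine Summable.of_norm_bounded (hgeo.mul_left (R₀ * γ)) fun n => ?_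
    rw [Real.norm_eq_abs]; exact hterm_b a s n
  have hsum0 : ∀ s : S, Summable fun n : ℕ => γ ^ n * ((Pop a')^[n] (r a')) s := by
    intro s
    refine Summable.of_norm_bounded (hgeo.mul_left R₀) fun n => ?_
    rw [Real.norm_eq_abs, abs_mul, abs_of_nonneg (pow_nonneg hγ0.le n)]
    calc γ ^ n * |((Pop a')^[n] (r a')) s| ≤ γ ^ n * R₀ :=
          mul_le_mul_of_nonneg_left (hiterb n a' s) (by positivity)
      _ = R₀ * γ ^ n := by ring
  -- the value-function form of `Q a' a'`
  have hQ'' : ∀ s : S, Q a' a' s = ∑' n : ℕ, γ ^ n * ((Pop a')^[n] (r a')) s := by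
    intro s
    have h : ∑' n : ℕ, γ ^ n * ((Pop a')^[n] (r a')) s
        = r a' s + ∑' n : ℕ, γ ^ (n + 1) * (Pop a' ((Pop a')^[n] (r a'))) s := by
      rw [Summable.tsum_eq_zero_add (hsum0 s)]
      congr 1
      · simp
      · exact tsum_congr fun n => by rw [Function.iterate_succ_apply']
    rw [hQ]; exact h.symm
  -- bound on `Q`
  have hQb : ∀ (a : Bool) (s : S), |Q a' a s| ≤ R₀ + R₀ * γ * (1 - γ)⁻¹ := by
    intro a s
    rw [hQ]
    refine (abs_add_le _ _).trans (add_le_add (hr₀ a s) ?_)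
    have habs : Summable fun n : ℕ => |γ ^ (n + 1) * Pop a ((Pop a')^[n] (r a')) s| :=
      (hsum1 a s).abs
    calc |∑' n : ℕ, γ ^ (n + 1) * Pop a ((Pop a')^[n] (r a')) s|
        ≤ ∑' n : ℕ, |γ ^ (n + 1) * Pop a ((Pop a')^[n] (r a')) s| := by
          rw [← Real.norm_eq_abs]
          refine (norm_tsum_le_tsum_norm ?_).trans_eq (tsum_congr fun n => Real.norm_eq_abs _)
          exact habs
      _ ≤ ∑' n : ℕ, R₀ * γ * γ ^ n :=
          Summable.tsum_le_tsum (fun n => hterm_b a s n) habs (hgeo.mul_left _)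
      _ = R₀ * γ * (1 - γ)⁻¹ := by
          rw [tsum_mul_left, tsum_geometric_of_lt_one hγ0.le hγ1]
  set Qb : ℝ := R₀ + R₀ * γ * (1 - γ)⁻¹ with hQbdef
  -- measurability of `Q`
  have hQm : ∀ a : Bool, Measurable (Q a' a) := by
    intro a
    have h : Q a' a
        = fun s => r a s + ∑' n : ℕ, γ ^ (n + 1) * Pop a ((Pop a')^[n] (r a')) s :=
      funext fun s => hQ a' a s
    rw [h]
    exact (hrmeas a).add (meas_tsum_real
      (fun n => measurable_const.mul (hPopm a _ (hiterm n a'))) (fun s => hsum1 a s))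
  -- Bellman equation
  have bellman : ∀ (a : Bool) (s : S), Q a' a s = r a s + γ * Pop a (Q a' a') s := by
    intro a s
    haveI := hPprob a s
    have hint : ∀ n : ℕ,
        Integrable (fun s' => γ ^ n * ((Pop a')^[n] (r a')) s') (P a s) := by
      intro n
      refine ⟨(measurable_const.mul (hiterm n a')).aestronglyMeasurable, ?_⟩
      apply HasFiniteIntegral.of_bounded (C := R₀ * γ ^ n)
      refine Eventually.of_forall fun s' => ?_
      rw [Real.norm_eq_abs, abs_mul, abs_of_nonneg (pow_nonneg hγ0.le n)]
      calc γ ^ n * |((Pop a')^[n] (r a')) s'| ≤ γ ^ n * R₀ :=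
            mul_le_mul_of_nonneg_left (hiterb n a' s') (by positivity)
        _ = R₀ * γ ^ n := by ring
    have hswap : ∑' n : ℕ, (∫ s', γ ^ n * ((Pop a')^[n] (r a')) s' ∂(P a s))
        = ∫ s', (∑' n : ℕ, γ ^ n * ((Pop a')^[n] (r a')) s') ∂(P a s) := by
      refine integral_tsum_of_summable_integral_norm hint ?_
      refine Summable.of_nonneg_of_le
        (fun n => integral_nonneg fun s' => norm_nonneg _) (fun n => ?_) (hgeo.mul_left R₀)
      calc ∫ s', ‖γ ^ n * ((Pop a')^[n] (r a')) s'‖ ∂(P a s)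
          ≤ ∫ _s', R₀ * γ ^ n ∂(P a s) := by
            refine integral_mono_of_nonneg
              (Eventually.of_forall fun s' => norm_nonneg _) (integrable_const _)
              (Eventually.of_forall fun s' => ?_)
            show ‖γ ^ n * ((Pop a')^[n] (r a')) s'‖ ≤ R₀ * γ ^ n
            rw [Real.norm_eq_abs, abs_mul, abs_of_nonneg (pow_nonneg hγ0.le n)]
            calc γ ^ n * |((Pop a')^[n] (r a')) s'| ≤ γ ^ n * R₀ :=
                  mul_le_mul_of_nonneg_left (hiterb n a' s') (by positivity)
              _ = R₀ * γ ^ n := by ring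
        _ = R₀ * γ ^ n := by simp
    have hPopQ : Pop a (Q a' a') s = ∑' n : ℕ, γ ^ n * Pop a ((Pop a')^[n] (r a')) s := by
      rw [hPop]
      rw [integral_congr_ae (Eventually.of_forall fun s' => hQ'' s')]
      rw [← hswap]
      refine tsum_congr fun n => ?_
      rw [integral_const_mul, hPop]
    rw [hQ, hPopQ]
    congr 1
    rw [← tsum_mul_left]
    refine tsum_congr fun n => ?_
    rw [pow_succ]; ring
  -- The test function
  have hfm : Measurable fun ω => φ (St t ω, At t ω) :=
    hφm.comp ((hSt t).prodMk (hAt t))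
  have hfB : ∀ ω, ‖φ (St t ω, At t ω)‖ ≤ B := fun ω => by
    rw [Real.norm_eq_abs]; exact hB _
  have hStH : Measurable[H t] (St t) := by
    rw [measurable_iff_comap_le, hH]
    exact le_trans
      (le_iSup₂ (f := fun j (_ : j ≤ t) => MeasurableSpace.comap (St j) inferInstance) t le_rfl)
      (le_trans le_sup_left le_sup_left)
  have hAtH : Measurable[H t] (At t) := by
    rw [measurable_iff_comap_le, hH]
    exact le_trans
      (le_iSup₂ (f := fun j (_ : j ≤ t) => MeasurableSpace.comap (At j) inferInstance) t le_rfl)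
      (le_trans le_sup_right le_sup_left)
  have hfH : StronglyMeasurable[H t] fun ω => φ (St t ω, At t ω) :=
    (hφm.comp (hStH.prodMk hAtH)).stronglyMeasurable
  haveI : SigmaFinite (μ.trim hm) := by
    haveI := isFiniteMeasure_trim (μ := μ) hm
    infer_instance
  -- pulling an `H t`-measurable bounded factor through a conditional expectation
  have key : ∀ X : Ω → ℝ, Integrable X μ →
      ∫ ω, X ω * φ (St t ω, At t ω) ∂μ
        = ∫ ω, (μ[X | H t]) ω * φ (St t ω, At t ω) ∂μ := by
    intro X hX
    have hfX : Integrable ((fun ω => φ (St t ω, At t ω)) * X) μ :=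
      hX.bdd_mul hfm.aestronglyMeasurable (Eventually.of_forall hfB)
    have h1 : μ[(fun ω => φ (St t ω, At t ω)) * X | H t]
        =ᵐ[μ] (fun ω => φ (St t ω, At t ω)) * μ[X | H t] :=
      condExp_mul_of_stronglyMeasurable_left hfH hfX hX
    calc ∫ ω, X ω * φ (St t ω, At t ω) ∂μ
        = ∫ ω, ((fun ω => φ (St t ω, At t ω)) * X) ω ∂μ :=
          integral_congr_ae (Eventually.of_forall fun ω => by simp [mul_comm])
      _ = ∫ ω, (μ[(fun ω => φ (St t ω, At t ω)) * X | H t]) ω ∂μ :=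
          (integral_condExp hm).symm
      _ = ∫ ω, ((fun ω => φ (St t ω, At t ω)) * μ[X | H t]) ω ∂μ :=
          integral_congr_ae h1
      _ = ∫ ω, (μ[X | H t]) ω * φ (St t ω, At t ω) ∂μ :=
          integral_congr_ae (Eventually.of_forall fun ω => by simp [mul_comm])
  -- measurability of functions of `(A_t, S_t)`
  have hmeasbool : ∀ g : Bool → S → ℝ, (∀ a, Measurable (g a)) →
      Measurable fun ω => g (At t ω) (St t ω) := by
    intro g hg
    have h : (fun ω => g (At t ω) (St t ω))
        = fun ω => if At t ω = true then g true (St t ω) else g false (St t ω) := by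
      funext ω; cases h : At t ω <;> simp
    rw [h]
    exact Measurable.ite (hAt t (measurableSet_singleton true))
      ((hg true).comp (hSt t)) ((hg false).comp (hSt t))
  -- the four integrable random variables
  have hX1m : Measurable fun ω => Q a' (At t ω) (St t ω) := hmeasbool _ fun a => hQm a
  have hX1int : Integrable (fun ω => Q a' (At t ω) (St t ω)) μ :=
    ⟨hX1m.aestronglyMeasurable, HasFiniteIntegral.of_bounded (C := Qb)
      (Eventually.of_forall fun ω => by rw [Real.norm_eq_abs]; exact hQb _ _)⟩
  have hX3m : Measurable fun ω => Q a' a' (St (t + 1) ω) := (hQm a').comp (hSt (t + 1))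
  have hX3int : Integrable (fun ω => Q a' a' (St (t + 1) ω)) μ :=
    ⟨hX3m.aestronglyMeasurable, HasFiniteIntegral.of_bounded (C := Qb)
      (Eventually.of_forall fun ω => by rw [Real.norm_eq_abs]; exact hQb _ _)⟩
  have hXrm : Measurable fun ω => r (At t ω) (St t ω) := hmeasbool _ fun a => hrmeas a
  have hXrint : Integrable (fun ω => r (At t ω) (St t ω)) μ :=
    ⟨hXrm.aestronglyMeasurable, HasFiniteIntegral.of_bounded (C := R₀)
      (Eventually.of_forall fun ω => by rw [Real.norm_eq_abs]; exact hr₀ _ _)⟩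
  have hXpm : Measurable fun ω => Pop (At t ω) (Q a' a') (St t ω) :=
    hmeasbool _ fun a => hPopm a _ (hQm a')
  have hXpint : Integrable (fun ω => Pop (At t ω) (Q a' a') (St t ω)) μ :=
    ⟨hXpm.aestronglyMeasurable, HasFiniteIntegral.of_bounded (C := Qb)
      (Eventually.of_forall fun ω => by
        rw [Real.norm_eq_abs]; exact hPopb _ _ _ (fun s => hQb a' s) _)⟩
  -- products with the test function are integrable
  have hintf : ∀ X : Ω → ℝ, Integrable X μ →
      Integrable (fun ω => X ω * φ (St t ω, At t ω)) μ := by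
    intro X hX
    have h := hX.bdd_mul hfm.aestronglyMeasurable (Eventually.of_forall hfB)
    refine h.congr (Eventually.of_forall fun ω => ?_)
    simp [mul_comm]
  -- identify the conditional expectations
  have hY : ∫ ω, Yt t ω * φ (St t ω, At t ω) ∂μ
      = ∫ ω, r (At t ω) (St t ω) * φ (St t ω, At t ω) ∂μ := by
    rw [key (Yt t) (hYt t)]
    refine integral_congr_ae ?_
    filter_upwards [hCMI t] with ω hω
    rw [hω]
  have hX3 : ∫ ω, Q a' a' (St (t + 1) ω) * φ (St t ω, At t ω) ∂μ
      = ∫ ω, Pop (At t ω) (Q a' a') (St t ω) * φ (St t ω, At t ω) ∂μ := by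
    rw [key _ hX3int]
    refine integral_congr_ae ?_
    filter_upwards [hMarkov t (Q a' a') (hQm a') ⟨Qb, fun s => hQb a' s⟩] with ω hω
    rw [hω]
  -- expand the integrand and conclude
  have hsplit : ∫ ω, (Q a' (At t ω) (St t ω) - Yt t ω - γ * Q a' a' (St (t + 1) ω))
      * φ (St t ω, At t ω) ∂μ
      = ∫ ω, Q a' (At t ω) (St t ω) * φ (St t ω, At t ω) ∂μ
        - ∫ ω, Yt t ω * φ (St t ω, At t ω) ∂μ
        - γ * ∫ ω, Q a' a' (St (t + 1) ω) * φ (St t ω, At t ω) ∂μ := by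
    have h : (fun ω => (Q a' (At t ω) (St t ω) - Yt t ω - γ * Q a' a' (St (t + 1) ω))
        * φ (St t ω, At t ω))
        = fun ω => Q a' (At t ω) (St t ω) * φ (St t ω, At t ω)
          - Yt t ω * φ (St t ω, At t ω)
          - γ * (Q a' a' (St (t + 1) ω) * φ (St t ω, At t ω)) := by
      funext ω; ring
    have hAB : Integrable (fun ω => Q a' (At t ω) (St t ω) * φ (St t ω, At t ω)
        - Yt t ω * φ (St t ω, At t ω)) μ := (hintf _ hX1int).sub (hintf _ (hYt t))
    rw [h, integral_sub hAB ((hintf _ hX3int).const_mul γ),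
      integral_sub (hintf _ hX1int) (hintf _ (hYt t)), integral_const_mul]
  have hbell : ∫ ω, Q a' (At t ω) (St t ω) * φ (St t ω, At t ω) ∂μ
      = ∫ ω, r (At t ω) (St t ω) * φ (St t ω, At t ω) ∂μ
        + γ * ∫ ω, Pop (At t ω) (Q a' a') (St t ω) * φ (St t ω, At t ω) ∂μ := by
    have h : (fun ω => Q a' (At t ω) (St t ω) * φ (St t ω, At t ω))
        = fun ω => r (At t ω) (St t ω) * φ (St t ω, At t ω)
          + γ * (Pop (At t ω) (Q a' a') (St t ω) * φ (St t ω, At t ω)) := by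
      funext ω
      rw [bellman (At t ω) (St t ω)]; ring
    rw [h, integral_add (hintf _ hXrint) ((hintf _ hXpint).const_mul γ), integral_const_mul]
  rw [hsplit, hY, hX3, hbell]
  ring
end

section
/- For every vector a ∈ ℝ^q, writing f(s) = a^⊤Ψ(s), one has a^⊤ [ ∫∫ Ψ(s) (Ψ(s) − γ Ψ(s'))^⊤ μ(ds) μ(ds') ] a = m ∫ f² dμ − γ (∫ f dμ)² ≥ (1 − γ) m ∫ f² dμ. If in addition the Gram matrix ∫ Ψ(s) Ψ(s)^⊤ μ(ds) has smallest eigenvalue at least 1/c̄ for some c̄ > 0, then a^⊤ [ ∫∫ Ψ(s) (Ψ(s) − γ Ψ(s'))^⊤ μ(ds) μ(ds') ] a ≥ (1 − γ) (m/c̄) ‖a‖₂² for every a ∈ ℝ^q. -/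
open MeasureTheory Matrix

/-- For every `a ∈ ℝ^q`, with `f(s) = a^⊤Ψ(s)`,
`a^⊤ [∫∫ Ψ(s)(Ψ(s) − γΨ(s'))^⊤ μ(ds)μ(ds')] a = m ∫ f² dμ − γ (∫ f dμ)²
  ≥ (1 − γ) m ∫ f² dμ`.
If moreover the Gram matrix `∫ ΨΨ^⊤ dμ` has smallest eigenvalue at least `1/cbar` (`cbar > 0`),
i.e. `a^⊤(∫ΨΨ^⊤dμ)a ≥ ‖a‖₂²/cbar` for all `a`, then
`a^⊤ [∫∫ Ψ(s)(Ψ(s) − γΨ(s'))^⊤ μ(ds)μ(ds')] a ≥ (1 − γ)(m/cbar)‖a‖₂²` for every `a`. -/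
theorem td_design_matrix_quadratic_form_bound
    {S : Type*} [MeasurableSpace S] (μ : Measure S) [IsFiniteMeasure μ]
    (q : ℕ)
    (γ : ℝ) (hγ0 : 0 ≤ γ) (hγ1 : γ < 1)
    (Ψ : S → Fin q → ℝ)
    (hΨmeas : ∀ i, Measurable fun s => Ψ s i)
    (hΨL2 : ∀ i, MemLp (fun s => Ψ s i) 2 μ)
    (m : ℝ) (hm : m = (μ Set.univ).toReal)
    -- the matrix `∫∫ Ψ(s)(Ψ(s) − γΨ(s'))^⊤ μ(ds)μ(ds')`
    (M : Matrix (Fin q) (Fin q) ℝ)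
    (hM : ∀ i j, M i j = ∫ s, ∫ s', Ψ s i * (Ψ s j - γ * Ψ s' j) ∂μ ∂μ)
    -- the Gram matrix `∫ Ψ(s)Ψ(s)^⊤ μ(ds)`
    (G : Matrix (Fin q) (Fin q) ℝ)
    (hG : ∀ i j, G i j = ∫ s, Ψ s i * Ψ s j ∂μ) :
    (∀ a : Fin q → ℝ,
      a ⬝ᵥ M *ᵥ a
          = m * (∫ s, (a ⬝ᵥ Ψ s) ^ 2 ∂μ) - γ * (∫ s, a ⬝ᵥ Ψ s ∂μ) ^ 2
        ∧ (1 - γ) * m * (∫ s, (a ⬝ᵥ Ψ s) ^ 2 ∂μ) ≤ a ⬝ᵥ M *ᵥ a) ∧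
    (∀ cbar : ℝ, 0 < cbar →
      (∀ a : Fin q → ℝ, (1 / cbar) * (∑ i, a i ^ 2) ≤ a ⬝ᵥ G *ᵥ a) →
      ∀ a : Fin q → ℝ, (1 - γ) * (m / cbar) * (∑ i, a i ^ 2) ≤ a ⬝ᵥ M *ᵥ a) := by
  have hm0' : 0 ≤ m := hm ▸ ENNReal.toReal_nonneg
  have hint : ∀ i, Integrable (fun s => Ψ s i) μ :=
    fun i => (hΨL2 i).integrable one_le_two
  have hmul : ∀ i j, Integrable (fun s => Ψ s i * Ψ s j) μ := by
    intro i j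
    have h1 := ((hΨL2 i).add (hΨL2 j)).integrable_sq
    have h2 := (hΨL2 i).integrable_sq
    have h3 := (hΨL2 j).integrable_sq
    have heq : (fun s => Ψ s i * Ψ s j)
        = fun s => ((Ψ s i + Ψ s j) ^ 2 - Ψ s i ^ 2 - Ψ s j ^ 2) / 2 := by
      funext s; ring
    rw [heq]
    exact ((h1.sub h2).sub h3).div_const 2
  -- value of M
  have hMval : ∀ i j, M i j = m * (∫ s, Ψ s i * Ψ s j ∂μ)
      - γ * ((∫ s, Ψ s i ∂μ) * (∫ s, Ψ s j ∂μ)) := by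
    intro i j
    rw [hM]
    have h1 : ∀ s, (∫ s', Ψ s i * (Ψ s j - γ * Ψ s' j) ∂μ)
        = m * (Ψ s i * Ψ s j) - (γ * ∫ s', Ψ s' j ∂μ) * Ψ s i := by
      intro s
      have heq : (fun s' => Ψ s i * (Ψ s j - γ * Ψ s' j))
          = fun s' => (Ψ s i * Ψ s j) - (γ * Ψ s i) * Ψ s' j := by funext s'; ring
      rw [heq, integral_sub (integrable_const _) ((hint j).const_mul _),
        integral_const, integral_const_mul, smul_eq_mul, measureReal_def, ← hm]
      ring
    simp_rw [h1]
    rw [integral_sub ((hmul i j).const_mul m) ((hint i).const_mul _),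
      integral_const_mul, integral_const_mul]
    ring
  -- generic quadratic form expansion
  have hdot : ∀ (N : Matrix (Fin q) (Fin q) ℝ) (a : Fin q → ℝ),
      a ⬝ᵥ N *ᵥ a = ∑ i, ∑ j, (a i * a j) * N i j := by
    intro N a
    simp only [dotProduct, mulVec, Finset.mul_sum]
    exact Finset.sum_congr rfl fun i _ => Finset.sum_congr rfl fun j _ => by ring
  -- L² membership of f
  have hfL2 : ∀ a : Fin q → ℝ, MemLp (fun s => a ⬝ᵥ Ψ s) 2 μ := by
    intro a
    have heq : (fun s => a ⬝ᵥ Ψ s) = fun s => ∑ i, a i * Ψ s i := by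
      funext s; simp [dotProduct]
    rw [heq]
    have h := memLp_finset_sum' (μ := μ) (p := 2) Finset.univ
      (f := fun i s => a i * Ψ s i) fun i _ => (hΨL2 i).const_mul (a i)
    convert h using 1
    funext s; simp
  have hfint : ∀ a : Fin q → ℝ, Integrable (fun s => a ⬝ᵥ Ψ s) μ :=
    fun a => (hfL2 a).integrable one_le_two
  have hfsqint : ∀ a : Fin q → ℝ, Integrable (fun s => (a ⬝ᵥ Ψ s) ^ 2) μ :=
    fun a => (hfL2 a).integrable_sq
  -- expansion of ∫ f²
  have hfsq : ∀ a : Fin q → ℝ, ∫ s, (a ⬝ᵥ Ψ s) ^ 2 ∂μ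
      = ∑ i, ∑ j, (a i * a j) * (∫ s, Ψ s i * Ψ s j ∂μ) := by
    intro a
    have heq : ∀ s, (a ⬝ᵥ Ψ s) ^ 2 = ∑ i, ∑ j, (a i * a j) * (Ψ s i * Ψ s j) := by
      intro s
      simp only [dotProduct, sq, Finset.sum_mul_sum]
      exact Finset.sum_congr rfl fun i _ => Finset.sum_congr rfl fun j _ => by ring
    simp_rw [heq]
    rw [integral_finset_sum _ fun i _ =>
      integrable_finset_sum _ fun j _ => (hmul i j).const_mul _]
    refine Finset.sum_congr rfl fun i _ => ?_
    rw [integral_finset_sum _ fun j _ => (hmul i j).const_mul _]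
    exact Finset.sum_congr rfl fun j _ => integral_const_mul _ _
  -- expansion of ∫ f
  have hfI : ∀ a : Fin q → ℝ, ∫ s, a ⬝ᵥ Ψ s ∂μ = ∑ i, a i * ∫ s, Ψ s i ∂μ := by
    intro a
    have heq : (fun s => a ⬝ᵥ Ψ s) = fun s => ∑ i, a i * Ψ s i := by
      funext s; simp [dotProduct]
    rw [heq, integral_finset_sum _ fun i _ => (hint i).const_mul _]
    exact Finset.sum_congr rfl fun i _ => integral_const_mul _ _
  -- the key identity
  have key : ∀ a : Fin q → ℝ, a ⬝ᵥ M *ᵥ a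
      = m * (∫ s, (a ⬝ᵥ Ψ s) ^ 2 ∂μ) - γ * (∫ s, a ⬝ᵥ Ψ s ∂μ) ^ 2 := by
    intro a
    rw [hdot, hfsq, hfI]
    simp_rw [hMval]
    rw [sq, Finset.sum_mul_sum, Finset.mul_sum, Finset.mul_sum, ← Finset.sum_sub_distrib]
    refine Finset.sum_congr rfl fun i _ => ?_
    rw [Finset.mul_sum, Finset.mul_sum, ← Finset.sum_sub_distrib]
    exact Finset.sum_congr rfl fun j _ => by ring
  -- Cauchy–Schwarz: (∫ f)² ≤ m ∫ f²
  have hCS : ∀ a : Fin q → ℝ,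
      (∫ s, a ⬝ᵥ Ψ s ∂μ) ^ 2 ≤ m * ∫ s, (a ⬝ᵥ Ψ s) ^ 2 ∂μ := by
    intro a
    by_cases hμ : μ = 0
    · simp [hμ, hm]
    · have hm0 : 0 < m := by
        rw [hm]
        exact ENNReal.toReal_pos (by simpa [Measure.measure_univ_eq_zero] using hμ)
          (measure_ne_top μ _)
      set f := fun s => a ⬝ᵥ Ψ s with hf
      have h1 : Integrable f μ := hfint a
      have h2 : Integrable (fun s => f s ^ 2) μ := hfsqint a
      have expand : ∫ s, (f s * m - ∫ t, f t ∂μ) ^ 2 ∂μ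
          = m ^ 2 * (∫ s, f s ^ 2 ∂μ) - m * (∫ s, f s ∂μ) ^ 2 := by
        have heq : ∀ s, (f s * m - ∫ t, f t ∂μ) ^ 2
            = m ^ 2 * f s ^ 2 - (2 * m * (∫ t, f t ∂μ)) * f s + (∫ t, f t ∂μ) ^ 2 :=
          fun s => by ring
        simp_rw [heq]
        have ha : Integrable
            (fun s => m ^ 2 * f s ^ 2 - (2 * m * (∫ t, f t ∂μ)) * f s) μ :=
          (h2.const_mul _).sub (h1.const_mul _)
        rw [integral_add ha (integrable_const _),
          integral_sub (h2.const_mul _) (h1.const_mul _), integral_const_mul,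
          integral_const_mul, integral_const, smul_eq_mul, measureReal_def, ← hm]
        ring
      have h0 : 0 ≤ ∫ s, (f s * m - ∫ t, f t ∂μ) ^ 2 ∂μ :=
        integral_nonneg fun s => sq_nonneg _
      nlinarith [h0, expand]
  -- part 1
  have part1 : ∀ a : Fin q → ℝ,
      a ⬝ᵥ M *ᵥ a = m * (∫ s, (a ⬝ᵥ Ψ s) ^ 2 ∂μ) - γ * (∫ s, a ⬝ᵥ Ψ s ∂μ) ^ 2
      ∧ (1 - γ) * m * (∫ s, (a ⬝ᵥ Ψ s) ^ 2 ∂μ) ≤ a ⬝ᵥ M *ᵥ a := by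
    intro a
    refine ⟨key a, ?_⟩
    rw [key a]
    have := mul_le_mul_of_nonneg_left (hCS a) hγ0
    nlinarith [this]
  refine ⟨part1, ?_⟩
  -- part 2
  intro cbar hc hGram a
  have hGa : a ⬝ᵥ G *ᵥ a = ∫ s, (a ⬝ᵥ Ψ s) ^ 2 ∂μ := by
    rw [hdot, hfsq]
    exact Finset.sum_congr rfl fun i _ => Finset.sum_congr rfl fun j _ => by rw [hG]
  have h1 : (1 / cbar) * (∑ i, a i ^ 2) ≤ ∫ s, (a ⬝ᵥ Ψ s) ^ 2 ∂μ := hGa ▸ hGram a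
  have h2 := (part1 a).2
  calc (1 - γ) * (m / cbar) * (∑ i, a i ^ 2)
      = (1 - γ) * m * ((1 / cbar) * (∑ i, a i ^ 2)) := by ring
    _ ≤ (1 - γ) * m * (∫ s, (a ⬝ᵥ Ψ s) ^ 2 ∂μ) :=
        mul_le_mul_of_nonneg_left h1 (mul_nonneg (by linarith) hm0')
    _ ≤ a ⬝ᵥ M *ᵥ a := h2
end

section
/- Let (ε_t)_{t≥0} be real square-integrable random variables with mean zero and covariances E[ε_s ε_t] = ρ^{|s−t|} for all s, t ≥ 0, where ρ ∈ (−1, 1). Define the alternating-sign estimator τ̂_T = (2/T) Σ_{t=0}^{T−1} (−1)^{t+1} ε_t. Then lim_{T→∞} T · E[τ̂_T²] = 4(1 − ρ)/(1 + ρ). -/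
open MeasureTheory Filter

private lemma sign_aux (ρ : ℝ) (s t : ℕ) :
    (-1 : ℝ) ^ (s + 1) * (-1 : ℝ) ^ (t + 1) * ρ ^ ((s : ℤ) - (t : ℤ)).natAbs
      = (-ρ) ^ ((s : ℤ) - (t : ℤ)).natAbs := by
  have h1 : (-1 : ℝ) ^ (s + 1) * (-1 : ℝ) ^ (t + 1) = (-1 : ℝ) ^ (s + t) := by
    rw [← pow_add, show s + 1 + (t + 1) = s + t + 2 by ring, pow_add]
    norm_num
  have hmod : (s + t) % 2 = (((s : ℤ) - (t : ℤ)).natAbs) % 2 := by omega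
  have h2 : (-1 : ℝ) ^ (s + t) = (-1 : ℝ) ^ (((s : ℤ) - (t : ℤ)).natAbs) := by
    rcases Nat.even_or_odd (s + t) with h | h
    · have h' : Even (((s : ℤ) - (t : ℤ)).natAbs) := by
        rw [Nat.even_iff] at *; omega
      rw [h.neg_one_pow, h'.neg_one_pow]
    · have h' : Odd (((s : ℤ) - (t : ℤ)).natAbs) := by
        rw [Nat.odd_iff] at *; omega
      rw [h.neg_one_pow, h'.neg_one_pow]
  rw [h1, h2, neg_pow]
  ring

private lemma sum_closed_form (r : ℝ) (hr : r ≠ 1) (T : ℕ) :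
    ∑ s ∈ Finset.range T, ∑ t ∈ Finset.range T, r ^ ((s : ℤ) - (t : ℤ)).natAbs
      = ((1 + r) / (1 - r)) * T - (2 * r / (1 - r) ^ 2) * (1 - r ^ T) := by
  have hr' : (1 : ℝ) - r ≠ 0 := sub_ne_zero.mpr (Ne.symm hr)
  have hr'' : r - 1 ≠ 0 := sub_ne_zero.mpr hr
  induction T with
  | zero => simp
  | succ T ih =>
    have hG : ∀ u : ℕ, u ∈ Finset.range T →
        r ^ ((T : ℤ) - (u : ℤ)).natAbs = r ^ (T - 1 - u + 1) := by
      intro u hu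
      rw [Finset.mem_range] at hu
      congr 1
      omega
    have hGsum : ∑ u ∈ Finset.range T, r ^ ((T : ℤ) - (u : ℤ)).natAbs
        = r * ((r ^ T - 1) / (r - 1)) := by
      rw [Finset.sum_congr rfl hG, Finset.sum_range_reflect (fun j => r ^ (j + 1)) T]
      simp_rw [pow_succ, ← Finset.sum_mul, geom_sum_eq hr T]
      ring
    rw [Finset.sum_range_succ]
    have hinner : ∀ s : ℕ, s ∈ Finset.range T →
        (∑ t ∈ Finset.range (T + 1), r ^ ((s : ℤ) - (t : ℤ)).natAbs)
          = (∑ t ∈ Finset.range T, r ^ ((s : ℤ) - (t : ℤ)).natAbs)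
            + r ^ ((T : ℤ) - (s : ℤ)).natAbs := by
      intro s _
      rw [Finset.sum_range_succ]
      congr 2
      omega
    rw [Finset.sum_congr rfl hinner, Finset.sum_add_distrib, ih,
      Finset.sum_range_succ, hGsum]
    simp only [sub_self, Int.natAbs_zero, pow_zero]
    push_cast
    field_simp
    ring

/-- Let `(ε_t)` be square-integrable, mean-zero random variables with
covariances `E[ε_s ε_t] = ρ^{|s−t|}` for some `ρ ∈ (−1,1)`, and let
`τ̂_T = (2/T) Σ_{t<T} (−1)^{t+1} ε_t` be the alternating-sign estimator. Then
`lim_{T→∞} T E[τ̂_T²] = 4(1 − ρ)/(1 + ρ)`. -/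
theorem alternating_design_asymptotic_variance
    {Ω : Type*} [MeasurableSpace Ω] (μ : Measure Ω) [IsProbabilityMeasure μ]
    (ε : ℕ → Ω → ℝ)
    (hL2 : ∀ t, MemLp (ε t) 2 μ)
    (hmean : ∀ t, ∫ ω, ε t ω ∂μ = 0)
    (ρ : ℝ) (hρl : -1 < ρ) (hρu : ρ < 1)
    (hcov : ∀ s t : ℕ, ∫ ω, ε s ω * ε t ω ∂μ = ρ ^ ((s : ℤ) - (t : ℤ)).natAbs)
    (τ : ℕ → Ω → ℝ)
    (hτ : ∀ T ω, τ T ω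
      = (2 / (T : ℝ)) * ∑ t ∈ Finset.range T, (-1 : ℝ) ^ (t + 1) * ε t ω) :
    Tendsto (fun T : ℕ => (T : ℝ) * ∫ ω, (τ T ω) ^ 2 ∂μ) atTop
      (nhds (4 * (1 - ρ) / (1 + ρ))) := by
  set r : ℝ := -ρ with hr_def
  have hr1 : r ≠ 1 := by rw [hr_def]; intro h; linarith [neg_eq_iff_eq_neg.mp h]
  have h1r : (1 : ℝ) - r ≠ 0 := sub_ne_zero.mpr (Ne.symm hr1)
  have habs : |r| < 1 := by rw [abs_lt, hr_def]; constructor <;> linarith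
  -- integrability of products
  have hint : ∀ s t : ℕ, Integrable (fun ω => ε s ω * ε t ω) μ := by
    intro s t
    have h1 := ((hL2 s).add (hL2 t)).integrable_sq
    have h2 := (hL2 s).integrable_sq
    have h3 := (hL2 t).integrable_sq
    have h4 := ((h1.sub h2).sub h3).div_const 2
    refine h4.congr (Eventually.of_forall fun ω => ?_)
    simp only [Pi.sub_apply, Pi.add_apply]
    ring
  -- exact value of the integral
  have key : ∀ T : ℕ, ∫ ω, (τ T ω) ^ 2 ∂μ
      = (2 / (T : ℝ)) ^ 2 * ∑ s ∈ Finset.range T, ∑ t ∈ Finset.range T,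
          r ^ ((s : ℤ) - (t : ℤ)).natAbs := by
    intro T
    have hfun : ∀ ω, (τ T ω) ^ 2
        = (2 / (T : ℝ)) ^ 2 * ∑ s ∈ Finset.range T, ∑ t ∈ Finset.range T,
            ((-1 : ℝ) ^ (s + 1) * (-1 : ℝ) ^ (t + 1)) * (ε s ω * ε t ω) := by
      intro ω
      rw [hτ, mul_pow]
      congr 1
      rw [sq, Finset.sum_mul_sum]
      refine Finset.sum_congr rfl fun s _ => Finset.sum_congr rfl fun t _ => ?_
      ring
    simp_rw [hfun]
    rw [integral_const_mul]
    congr 1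
    rw [integral_finset_sum _ fun s _ => (integrable_finset_sum _
      fun t _ => ((hint s t).const_mul _))]
    refine Finset.sum_congr rfl fun s _ => ?_
    rw [integral_finset_sum _ fun t _ => ((hint s t).const_mul _)]
    refine Finset.sum_congr rfl fun t _ => ?_
    rw [integral_const_mul, hcov s t, sign_aux]
  -- rewrite via closed form for T ≥ 1
  have heq : ∀ T : ℕ, 1 ≤ T →
      (T : ℝ) * ∫ ω, (τ T ω) ^ 2 ∂μ
        = 4 * ((1 + r) / (1 - r)) - (4 * (2 * r / (1 - r) ^ 2)) * ((1 - r ^ T) / T) := by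
    intro T hT
    have hT0 : (T : ℝ) ≠ 0 := Nat.cast_ne_zero.mpr (by omega)
    rw [key T, sum_closed_form r hr1 T]
    field_simp
    ring
  have hlim : Tendsto (fun T : ℕ =>
      4 * ((1 + r) / (1 - r)) - (4 * (2 * r / (1 - r) ^ 2)) * ((1 - r ^ T) / T))
      atTop (nhds (4 * (1 - ρ) / (1 + ρ))) := by
    have h1 : Tendsto (fun T : ℕ => (1 - r ^ T) / (T : ℝ)) atTop (nhds 0) := by
      have ha : Tendsto (fun T : ℕ => 1 - r ^ T) atTop (nhds (1 - 0)) :=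
        (tendsto_const_nhds.sub (tendsto_pow_atTop_nhds_zero_of_abs_lt_one habs))
      have hb : Tendsto (fun T : ℕ => ((T : ℝ))⁻¹) atTop (nhds 0) :=
        tendsto_inv_atTop_zero.comp tendsto_natCast_atTop_atTop
      have := ha.mul hb
      simpa [div_eq_mul_inv] using this
    have h2 : Tendsto (fun T : ℕ =>
        4 * ((1 + r) / (1 - r)) - (4 * (2 * r / (1 - r) ^ 2)) * ((1 - r ^ T) / T))
        atTop (nhds (4 * ((1 + r) / (1 - r)) - (4 * (2 * r / (1 - r) ^ 2)) * 0)) :=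
      tendsto_const_nhds.sub (tendsto_const_nhds.mul h1)
    rw [mul_zero, sub_zero] at h2
    convert h2 using 2
    rw [hr_def]
    have : (1 : ℝ) + ρ ≠ 0 := by linarith
    ring
  refine hlim.congr' ?_
  filter_upwards [eventually_ge_atTop 1] with T hT
  exact (heq T hT).symm
end
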